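/- arXiv:1907.06220 — 5 statements merged into one kernel-verified Lean document; each statement's English description precedes it below -/
import Mathlib

section
/- Let ω be a non-principal ultrafilter on ℕ and ρ_n → 0 a positive sequence. The set M_1 = {t ∈ *ℂ : |t_n| < ρ_n^N ω-almost surely, for all N ∈ ℕ} is a maximal ideal of the ring M_0 = {t ∈ *ℂ : there exists N ∈ ℕ with |t_n| < ρ_n^{-N} ω-almost surely}. -/
open Filter

/-- Let ω be a non-principal ultrafilter on ℕ and ρ_n → 0 a positive sequence.
In the ultrapower *ℂ (germs of sequences of complex numbers along ω), the set
`M1` of sequences smaller than every power ρ^N is a maximal ideal of the ring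
`M0` of sequences of at most polynomial growth in ρ^{-1}. -/
theorem M1_maximal_ideal_of_M0
    (ω : Ultrafilter ℕ) (hω : ¬∃ a : ℕ, ω = pure a)
    (ρ : ℕ → ℝ) (hρpos : ∀ n, 0 < ρ n) (hρ0 : Tendsto ρ atTop (nhds 0))
    (M0 M1 : Set (Filter.Germ (ω : Filter ℕ) ℂ))
    (hM0 : M0 = {t | ∃ u : ℕ → ℂ, t = Filter.Germ.ofFun u ∧
      ∃ N : ℕ, ∀ᶠ n in (ω : Filter ℕ), ‖u n‖ < ρ n ^ (-(N : ℝ))})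
    (hM1 : M1 = {t | ∃ u : ℕ → ℂ, t = Filter.Germ.ofFun u ∧
      ∀ N : ℕ, ∀ᶠ n in (ω : Filter ℕ), ‖u n‖ < ρ n ^ (N : ℝ)}) :
    -- M0 is a subring of *ℂ:
    ((1 : Filter.Germ (ω : Filter ℕ) ℂ) ∈ M0) ∧
    (∀ x ∈ M0, ∀ y ∈ M0, x + y ∈ M0) ∧
    (∀ x ∈ M0, ∀ y ∈ M0, x * y ∈ M0) ∧
    (∀ x ∈ M0, -x ∈ M0) ∧
    -- M1 is an ideal of M0:
    M1 ⊆ M0 ∧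
    ((0 : Filter.Germ (ω : Filter ℕ) ℂ) ∈ M1) ∧
    (∀ x ∈ M1, ∀ y ∈ M1, x + y ∈ M1) ∧
    (∀ x ∈ M0, ∀ y ∈ M1, x * y ∈ M1) ∧
    -- M1 is a proper ideal:
    M1 ≠ M0 ∧
    -- and M1 is maximal among ideals of M0:
    (∀ I : Set (Filter.Germ (ω : Filter ℕ) ℂ),
      M1 ⊆ I → I ⊆ M0 → (0 : Filter.Germ (ω : Filter ℕ) ℂ) ∈ I →
      (∀ x ∈ I, ∀ y ∈ I, x + y ∈ I) →
      (∀ x ∈ M0, ∀ y ∈ I, x * y ∈ I) →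
      I ≠ M0 → I = M1) := by
  -- ω is ≤ atTop
  have hle : (ω : Filter ℕ) ≤ atTop := by
    rcases ω.le_cofinite_or_eq_pure with h | h
    · rwa [Nat.cofinite_eq_atTop] at h
    · exact absurd h hω
  have hsmall : ∀ ε : ℝ, 0 < ε → ∀ᶠ n in (ω : Filter ℕ), ρ n < ε := by
    intro ε hε
    exact hle ((hρ0.eventually (gt_mem_nhds hε)))
  have hρ1 : ∀ᶠ n in (ω : Filter ℕ), ρ n < 1 := hsmall 1 one_pos
  have hρhalf : ∀ᶠ n in (ω : Filter ℕ), ρ n < 1/2 := hsmall (1/2) (by norm_num)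
  -- basic rpow facts
  have hrpos : ∀ (n : ℕ) (x : ℝ), 0 < ρ n ^ x := fun n x =>
    Real.rpow_pos_of_pos (hρpos n) x
  have hmono : ∀ (n : ℕ), ρ n < 1 → ∀ x y : ℝ, y ≤ x → ρ n ^ x ≤ ρ n ^ y :=
    fun n h1 x y hxy => Real.rpow_le_rpow_of_exponent_ge (hρpos n) h1.le hxy
  constructor
  · -- 1 ∈ M0
    rw [hM0]
    refine ⟨1, rfl, 1, ?_⟩
    filter_upwards [hρ1] with n h1
    simp only [Pi.one_apply, norm_one]
    rw [show (-(1:ℕ):ℝ) = -1 by norm_num, Real.rpow_neg_one]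
    rw [lt_inv_comm₀ one_pos (hρpos n)]
    simpa using h1
  refine ⟨?_, ?_, ?_, ?_, ?_, ?_, ?_, ?_, ?_⟩
  · -- add closed M0
    rw [hM0]
    rintro x ⟨u, rfl, N1, hu⟩ y ⟨v, rfl, N2, hv⟩
    refine ⟨u + v, rfl, max N1 N2 + 1, ?_⟩
    filter_upwards [hu, hv, hρhalf, hρ1] with n hu hv hhalf h1
    have h1' : ‖u n‖ < ρ n ^ (-(max N1 N2 : ℕ) : ℝ) :=
      hu.trans_le (hmono n h1 _ _ (by push_cast; simp [neg_le_neg_iff]))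
    have h2' : ‖v n‖ < ρ n ^ (-(max N1 N2 : ℕ) : ℝ) :=
      hv.trans_le (hmono n h1 _ _ (by push_cast; simp [neg_le_neg_iff]))
    calc ‖u n + v n‖ ≤ ‖u n‖ + ‖v n‖ :=
          norm_add_le _ _
      _ < ρ n ^ (-(max N1 N2 : ℕ) : ℝ) + ρ n ^ (-(max N1 N2 : ℕ) : ℝ) := by
          exact add_lt_add h1' h2'
      _ = 2 * ρ n ^ (-(max N1 N2 : ℕ) : ℝ) := by ring
      _ ≤ ρ n ^ (-1 : ℝ) * ρ n ^ (-(max N1 N2 : ℕ) : ℝ) := by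
          apply mul_le_mul_of_nonneg_right _ (hrpos n _).le
          rw [Real.rpow_neg_one, le_inv_comm₀ two_pos (hρpos n)]
          linarith
      _ = ρ n ^ (-((max N1 N2 + 1 : ℕ)) : ℝ) := by
          rw [← Real.rpow_add (hρpos n)]; push_cast; ring_nf
  · -- mul closed M0
    rw [hM0]
    rintro x ⟨u, rfl, N1, hu⟩ y ⟨v, rfl, N2, hv⟩
    refine ⟨u * v, rfl, N1 + N2, ?_⟩
    filter_upwards [hu, hv] with n hu hv
    have : ‖u n * v n‖ < ρ n ^ (-(N1:ℝ)) * ρ n ^ (-(N2:ℝ)) := by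
      rw [norm_mul]
      exact mul_lt_mul'' hu hv (norm_nonneg _) (norm_nonneg _)
    calc ‖(u * v) n‖ < ρ n ^ (-(N1:ℝ)) * ρ n ^ (-(N2:ℝ)) := this
      _ = ρ n ^ (-((N1 + N2 : ℕ)) : ℝ) := by
          rw [← Real.rpow_add (hρpos n)]; push_cast; ring_nf
  · -- neg closed
    rw [hM0]
    rintro x ⟨u, rfl, N, hu⟩
    exact ⟨-u, rfl, N, by simpa using hu⟩
  · -- M1 ⊆ M0
    rw [hM0, hM1]
    rintro x ⟨u, rfl, hu⟩
    refine ⟨u, rfl, 1, ?_⟩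
    filter_upwards [hu 1, hρ1] with n hn h1
    exact hn.trans_le (hmono n h1 _ _ (by norm_num))
  · -- 0 ∈ M1
    rw [hM1]
    exact ⟨0, rfl, fun N => Eventually.of_forall fun n => by simpa using hrpos n (N:ℝ)⟩
  · -- add closed M1
    rw [hM1]
    rintro x ⟨u, rfl, hu⟩ y ⟨v, rfl, hv⟩
    refine ⟨u + v, rfl, fun N => ?_⟩
    filter_upwards [hu (N+1), hv (N+1), hρhalf, hρ1] with n hu hv hhalf h1
    calc ‖u n + v n‖ ≤ ‖u n‖ + ‖v n‖ :=
          norm_add_le _ _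
      _ < ρ n ^ ((N+1:ℕ):ℝ) + ρ n ^ ((N+1:ℕ):ℝ) := add_lt_add hu hv
      _ = 2 * ρ n ^ ((N+1:ℕ):ℝ) := by ring
      _ = 2 * (ρ n * ρ n ^ ((N:ℕ):ℝ)) := by
          rw [show ((N+1:ℕ):ℝ) = 1 + (N:ℝ) by push_cast; ring,
            Real.rpow_add (hρpos n), Real.rpow_one]
      _ ≤ 1 * ρ n ^ ((N:ℕ):ℝ) := by
          rw [← mul_assoc, one_mul]
          nlinarith [hrpos n ((N:ℕ):ℝ), hhalf]
      _ = ρ n ^ ((N:ℕ):ℝ) := one_mul _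
  · -- M0 * M1 ⊆ M1
    rw [hM0, hM1]
    rintro x ⟨u, rfl, N0, hu⟩ y ⟨v, rfl, hv⟩
    refine ⟨u * v, rfl, fun N => ?_⟩
    filter_upwards [hu, hv (N + N0)] with n hu hv
    calc ‖(u * v) n‖ = ‖u n‖ * ‖v n‖ := norm_mul _ _
      _ < ρ n ^ (-(N0:ℝ)) * ρ n ^ ((N + N0 : ℕ):ℝ) :=
          mul_lt_mul'' hu hv (norm_nonneg _) (norm_nonneg _)
      _ = ρ n ^ ((N:ℕ):ℝ) := by
          rw [← Real.rpow_add (hρpos n)]; push_cast; ring_nf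
  · -- proper
    intro h
    have h1 : (1 : Filter.Germ (ω : Filter ℕ) ℂ) ∈ M1 := by
      rw [h, hM0]
      refine ⟨1, rfl, 1, ?_⟩
      filter_upwards [hρ1] with n hn
      simp only [Pi.one_apply, norm_one]
      rw [show (-(1:ℕ):ℝ) = -1 by norm_num, Real.rpow_neg_one]
      rw [lt_inv_comm₀ one_pos (hρpos n)]
      simpa using hn
    rw [hM1] at h1
    obtain ⟨u, hu1, hu⟩ := h1
    have hequ : u =ᶠ[(ω : Filter ℕ)] 1 := (Filter.Germ.coe_eq.mp hu1.symm)
    have := (hu 1).and (hequ.and hρ1)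
    rcases this.exists with ⟨n, hlt, hequn, h1n⟩
    rw [hequn] at hlt
    simp only [Pi.one_apply, norm_one, Real.rpow_natCast, pow_one] at hlt
    linarith
  · -- maximality
    intro I hM1I hIM0 _h0 _hadd hmulI hIne
    apply Set.Subset.antisymm _ hM1I
    by_contra hns
    obtain ⟨x, hxI, hxM1⟩ := Set.not_subset.mp hns
    have hxM0 := hIM0 hxI
    rw [hM0] at hxM0
    obtain ⟨u, hxu, N0, hu⟩ := hxM0
    -- x ∉ M1 : since x = ofFun u, there is N with ¬ eventually |u| < ρ^N
    have hNbig : ∃ N : ℕ, ∀ᶠ n in (ω : Filter ℕ), ρ n ^ (N:ℝ) ≤ ‖u n‖ := by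
      by_contra hc
      push_neg at hc
      apply hxM1
      rw [hM1]
      refine ⟨u, hxu, fun N => ?_⟩
      have h2 := hc N
      filter_upwards [h2] with n hn
      exact hn
    obtain ⟨N, hN⟩ := hNbig
    -- build the inverse v
    set v : ℕ → ℂ := fun n => (u n)⁻¹ with hv
    have hvM0 : (Filter.Germ.ofFun v : Filter.Germ (ω : Filter ℕ) ℂ) ∈ M0 := by
      rw [hM0]
      refine ⟨v, rfl, N + 1, ?_⟩
      filter_upwards [hN, hρ1] with n hn h1
      have hun : u n ≠ 0 := by
        intro h0
        rw [h0] at hn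
        simpa using (hrpos n (N:ℝ)).trans_le hn
      have habs : 0 < ‖u n‖ := norm_pos_iff.mpr hun
      rw [hv]
      simp only [norm_inv]
      calc (‖u n‖)⁻¹ ≤ (ρ n ^ (N:ℝ))⁻¹ := by
            exact inv_anti₀ (hrpos n _) hn
        _ = ρ n ^ (-(N:ℝ)) := by rw [← Real.rpow_neg (hρpos n).le]
        _ < ρ n ^ (-((N+1:ℕ)):ℝ) := by
            apply Real.rpow_lt_rpow_of_exponent_gt (hρpos n) h1
            push_cast; linarith
    have h1I : (1 : Filter.Germ (ω : Filter ℕ) ℂ) ∈ I := by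
      have := hmulI _ hvM0 x hxI
      have heq : (Filter.Germ.ofFun v : Filter.Germ (ω : Filter ℕ) ℂ) * x = 1 := by
        rw [hxu]
        change Filter.Germ.ofFun (v * u) = Filter.Germ.ofFun 1
        apply Filter.Germ.coe_eq.mpr
        filter_upwards [hN] with n hn
        have hun : u n ≠ 0 := by
          intro h0
          rw [h0] at hn
          simpa using (hrpos n (N:ℝ)).trans_le hn
        simp [hv, Pi.mul_apply, inv_mul_cancel₀ hun]
      rwa [heq] at this
    apply hIne
    apply Set.Subset.antisymm hIM0
    intro y hy
    have := hmulI y hy 1 h1I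
    rwa [mul_one] at this
end

section
/- Let x ∈ M_0 \ M_1 and i ∈ M_1 with x + i ∈ M_0 \ M_1. Then lim_ω (log|x_n + i_n| / log ρ_n) = lim_ω (log|x_n| / log ρ_n). Consequently, ν([x]) := lim_ω log|x_n|/log ρ_n is a well-defined function on the nonzero elements of the quotient field ρℂ = M_0/M_1. -/
open Filter

/-- `OmegaLim ω u L` : the real number `L` is the ω-limit of the sequence `u`. -/
def OmegaLim (ω : Ultrafilter ℕ) (u : ℕ → ℝ) (L : ℝ) : Prop :=
  ∀ ε : ℝ, 0 < ε → {n : ℕ | |u n - L| < ε} ∈ ω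

private theorem omegaLim_iff_tendsto (ω : Ultrafilter ℕ) (u : ℕ → ℝ) (L : ℝ) :
    OmegaLim ω u L ↔ Tendsto u (ω : Filter ℕ) (nhds L) := by
  constructor
  · intro h
    rw [Metric.tendsto_nhds]
    intro ε hε
    filter_upwards [h ε hε] with n hn
    rwa [Real.dist_eq]
  · intro h ε hε
    have := Metric.tendsto_nhds.mp h ε hε
    simpa [Real.dist_eq, eventually_iff] using this

/-- Let x ∈ M₀ \ M₁ and i ∈ M₁ with x + i ∈ M₀ \ M₁.  Then
lim_ω log|x_n + i_n|/log ρ_n exists and equals lim_ω log|x_n|/log ρ_n.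
Consequently ν([x]) = lim_ω log|x_n|/log ρ_n is well defined on the nonzero
elements of the quotient field ρℂ = M₀/M₁. -/
theorem nu_well_defined
    (ω : Ultrafilter ℕ) (hω : ¬∃ a : ℕ, ω = pure a)
    (ρ : ℕ → ℝ) (hρpos : ∀ n, 0 < ρ n) (hρ0 : Tendsto ρ atTop (nhds 0))
    (x i : ℕ → ℂ)
    -- x ∈ M₀ :
    (hxM0 : ∃ N : ℕ, ∀ᶠ n in (ω : Filter ℕ), ‖x n‖ < ρ n ^ (-(N : ℝ)))
    -- x ∉ M₁ :
    (hxM1 : ∃ N : ℕ, ∀ᶠ n in (ω : Filter ℕ), ρ n ^ (N : ℝ) ≤ ‖x n‖)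
    -- i ∈ M₁ :
    (hi : ∀ N : ℕ, ∀ᶠ n in (ω : Filter ℕ), ‖i n‖ < ρ n ^ (N : ℝ))
    -- x + i ∈ M₀ \ M₁ :
    (hsM0 : ∃ N : ℕ, ∀ᶠ n in (ω : Filter ℕ),
      ‖x n + i n‖ < ρ n ^ (-(N : ℝ)))
    (hsM1 : ∃ N : ℕ, ∀ᶠ n in (ω : Filter ℕ),
      ρ n ^ (N : ℝ) ≤ ‖x n + i n‖) :
    (∃ L : ℝ, OmegaLim ω (fun n => Real.log (‖x n‖) / Real.log (ρ n)) L) ∧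
    (∀ L : ℝ,
      OmegaLim ω (fun n => Real.log (‖x n + i n‖) / Real.log (ρ n)) L ↔
      OmegaLim ω (fun n => Real.log (‖x n‖) / Real.log (ρ n)) L) := by
  set u : ℕ → ℝ := fun n => Real.log (‖x n‖) / Real.log (ρ n) with hu
  set v : ℕ → ℝ := fun n => Real.log (‖x n + i n‖) / Real.log (ρ n) with hv
  obtain ⟨Nx', hx0⟩ := hxM0
  obtain ⟨Nx, hx1⟩ := hxM1
  obtain ⟨Ns, hs1⟩ := hsM1
  -- ω contains the cofinite filter
  have hcof : (ω : Filter ℕ) ≤ cofinite := (ω.le_cofinite_or_eq_pure).resolve_right hω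
  have hatop : (ω : Filter ℕ) ≤ atTop := Nat.cofinite_eq_atTop ▸ hcof
  have hρω : Tendsto ρ (ω : Filter ℕ) (nhds 0) := hρ0.mono_left hatop
  have hρω' : Tendsto ρ (ω : Filter ℕ) (nhdsWithin 0 (Set.Ioi 0)) :=
    tendsto_nhdsWithin_of_tendsto_nhds_of_eventually_within _ hρω
      (Eventually.of_forall fun n => hρpos n)
  have hlogbot : Tendsto (fun n => Real.log (ρ n)) (ω : Filter ℕ) atBot :=
    Real.tendsto_log_nhdsGT_zero.comp hρω'
  have hlogneg : ∀ᶠ n in (ω : Filter ℕ), Real.log (ρ n) < 0 :=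
    hlogbot.eventually (eventually_lt_atBot 0)
  -- key estimate : |v n - u n| < ε  ω-a.e.
  have key : ∀ ε : ℝ, 0 < ε → ∀ᶠ n in (ω : Filter ℕ), |v n - u n| < ε := by
    intro ε hε
    set M : ℕ := max Nx Ns + 1 with hM
    have hlog2 : ∀ᶠ n in (ω : Filter ℕ), Real.log (ρ n) < -(Real.log 2 / ε) :=
      hlogbot.eventually (eventually_lt_atBot _)
    filter_upwards [hx1, hs1, hi M, hlogneg, hlog2] with n h1 h2 h3 h4 h5
    have hρn := hρpos n
    have hρlt1 : ρ n < 1 := (Real.log_neg_iff hρn).mp h4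
    have hxpos : 0 < ‖x n‖ := lt_of_lt_of_le (Real.rpow_pos_of_pos hρn _) h1
    have hspos : 0 < ‖x n + i n‖ := lt_of_lt_of_le (Real.rpow_pos_of_pos hρn _) h2
    -- ρ^M ≤ ρ^Nx  and  ρ^M ≤ ρ^Ns (since ρ ≤ 1, M ≥ Nx, Ns)
    have hMx : ρ n ^ (M : ℝ) ≤ ρ n ^ (Nx : ℝ) := by
      apply Real.rpow_le_rpow_of_exponent_ge hρn hρlt1.le
      exact_mod_cast Nat.le_succ_of_le (le_max_left _ _)
    have hMs : ρ n ^ (M : ℝ) ≤ ρ n ^ (Ns : ℝ) := by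
      apply Real.rpow_le_rpow_of_exponent_ge hρn hρlt1.le
      exact_mod_cast Nat.le_succ_of_le (le_max_right _ _)
    have hiX : ‖i n‖ ≤ ‖x n‖ := le_trans (le_trans h3.le hMx) h1
    have hiS : ‖i n‖ ≤ ‖x n + i n‖ := le_trans (le_trans h3.le hMs) h2
    -- |x+i| ≤ 2|x| and |x| ≤ 2|x+i|
    have hs2 : ‖x n + i n‖ ≤ 2 * ‖x n‖ := by
      calc ‖x n + i n‖ ≤ ‖x n‖ + ‖i n‖ :=
            norm_add_le _ _
        _ ≤ 2 * ‖x n‖ := by linarith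
    have hx2 : ‖x n‖ ≤ 2 * ‖x n + i n‖ := by
      have h := norm_add_le (x n + i n) (-(i n))
      rw [add_neg_cancel_right, norm_neg] at h
      linarith
    -- |log|x+i| - log|x|| ≤ log 2
    have hlogdiff : |Real.log (‖x n + i n‖) - Real.log (‖x n‖)|
        ≤ Real.log 2 := by
      rw [abs_le]
      constructor
      · have := Real.log_le_log hxpos hx2
        rw [Real.log_mul (by norm_num) hspos.ne'] at this
        linarith
      · have := Real.log_le_log hspos hs2
        rw [Real.log_mul (by norm_num) hxpos.ne'] at this
        linarith
    have hdiff : v n - u n =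
        (Real.log (‖x n + i n‖) - Real.log (‖x n‖)) /
          Real.log (ρ n) := by
      simp [hu, hv, sub_div]
    rw [hdiff, abs_div]
    have hlabs : Real.log 2 / ε < |Real.log (ρ n)| := by
      rw [abs_of_neg h4]
      linarith
    have h2pos : (0:ℝ) < Real.log 2 := Real.log_pos (by norm_num)
    have habspos : 0 < |Real.log (ρ n)| := lt_trans (by positivity) hlabs
    rw [div_lt_iff₀ habspos]
    calc |Real.log (‖x n + i n‖) - Real.log (‖x n‖)|
        ≤ Real.log 2 := hlogdiff
      _ < ε * |Real.log (ρ n)| := by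
          rw [← div_lt_iff₀' hε]
          exact hlabs
  -- difference tends to 0
  have hdiff0 : Tendsto (fun n => v n - u n) (ω : Filter ℕ) (nhds 0) := by
    rw [Metric.tendsto_nhds]
    intro ε hε
    filter_upwards [key ε hε] with n hn
    simpa [Real.dist_eq] using hn
  -- u is eventually in a compact interval
  have hbdd : ∀ᶠ n in (ω : Filter ℕ), u n ∈ Set.Icc (-(Nx' : ℝ)) (Nx : ℝ) := by
    filter_upwards [hx0, hx1, hlogneg] with n h0 h1 h4
    have hρn := hρpos n
    have hxpos : 0 < ‖x n‖ := lt_of_lt_of_le (Real.rpow_pos_of_pos hρn _) h1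
    have hl1 : (Nx : ℝ) * Real.log (ρ n) ≤ Real.log (‖x n‖) := by
      have := Real.log_le_log (Real.rpow_pos_of_pos hρn _) h1
      rwa [Real.log_rpow hρn] at this
    have hl2 : Real.log (‖x n‖) ≤ -(Nx' : ℝ) * Real.log (ρ n) := by
      have := Real.log_le_log hxpos h0.le
      rwa [Real.log_rpow hρn] at this
    constructor
    · rw [hu]
      rw [le_div_iff_of_neg h4]
      simpa using hl2
    · rw [hu]
      rw [div_le_iff_of_neg h4]
      simpa [mul_comm] using hl1
  obtain ⟨L, _, hL⟩ := isCompact_Icc.ultrafilter_le_nhds (ω.map u)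
    (by rw [Ultrafilter.coe_map, le_principal_iff, mem_map]; exact hbdd)
  rw [Ultrafilter.coe_map] at hL
  have huL : Tendsto u (ω : Filter ℕ) (nhds L) := hL
  refine ⟨⟨L, (omegaLim_iff_tendsto ω u L).mpr huL⟩, fun L' => ?_⟩
  rw [omegaLim_iff_tendsto, omegaLim_iff_tendsto]
  constructor
  · intro h
    have := h.sub hdiff0
    simpa [hu, hv] using this
  · intro h
    have := h.add hdiff0
    have h2 : Tendsto (fun n => u n + (v n - u n)) (ω : Filter ℕ) (nhds (L' + 0)) := this
    simpa using h2
end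

section
/- The complexified Robinson field ρℂ, equipped with the non-Archimedean metric d(x,y) = e^{−ν(x−y)}, is spherically complete: every nested decreasing sequence of closed balls in ρℂ has nonempty intersection. -/
open Filter

/-- `LeNormBall ω ρ u q` : the element of ρℂ represented by the sequence `u`
has non-Archimedean norm `|u|_ν ≤ e^{-q}`, i.e. ν(u) ≥ q. -/
def LeNormBall (ω : Ultrafilter ℕ) (ρ : ℕ → ℝ) (u : ℕ → ℂ) (q : ℝ) : Prop :=
  ∀ ε : ℝ, 0 < ε → ∀ᶠ n in (ω : Filter ℕ), ‖u n‖ ≤ ρ n ^ (q - ε)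

/-- The complexified Robinson field ρℂ is spherically complete: every nested
decreasing sequence of closed balls `B(c_k, e^{-q_k})` has a common point.
Nestedness is expressed by `q_k` nondecreasing and `|c_{k+1} - c_k|_ν ≤ e^{-q_k}`. -/
theorem robinson_field_spherically_complete
    (ω : Ultrafilter ℕ) (hω : ¬∃ a : ℕ, ω = pure a)
    (ρ : ℕ → ℝ) (hρpos : ∀ n, 0 < ρ n) (hρ0 : Tendsto ρ atTop (nhds 0))
    (c : ℕ → ℕ → ℂ) (q : ℕ → ℝ)
    -- each center lies in M₀, i.e. represents an element of ρℂ: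
    (hc : ∀ k, ∃ N : ℕ, ∀ᶠ n in (ω : Filter ℕ),
      ‖c k n‖ < ρ n ^ (-(N : ℝ)))
    -- the balls are nested:
    (hq : Monotone q)
    (hnest : ∀ k, LeNormBall ω ρ (fun n => c (k + 1) n - c k n) (q k)) :
    -- there is a point of ρℂ in every ball:
    ∃ a : ℕ → ℂ,
      (∃ N : ℕ, ∀ᶠ n in (ω : Filter ℕ), ‖a n‖ < ρ n ^ (-(N : ℝ))) ∧
      ∀ k, LeNormBall ω ρ (fun n => a n - c k n) (q k) := by
  classical
  -- the ultrafilter contains all cofinite sets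
  have hcof : (ω : Filter ℕ) ≤ cofinite := by
    rcases ω.le_cofinite_or_eq_pure with h | h
    · exact h
    · exact absurd h hω
  have hatTop : ∀ {p : ℕ → Prop}, (∀ᶠ n in atTop, p n) → ∀ᶠ n in (ω : Filter ℕ), p n := by
    intro p hp
    exact hcof (by rwa [Nat.cofinite_eq_atTop])
  -- the "good at level k" predicate
  set Good : ℕ → ℕ → Prop := fun k n =>
    ρ n < 1 ∧ (k : ℝ) * ρ n ^ (1 / ((k : ℝ) + 1)) ≤ 1 ∧
      ∀ j < k, ‖c (j + 1) n - c j n‖ ≤ ρ n ^ (q j - 1 / ((k : ℝ) + 1)) with hGooddef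
  have hinv_pos : ∀ k : ℕ, (0 : ℝ) < 1 / ((k : ℝ) + 1) := by
    intro k
    positivity
  have hρ1 : ∀ᶠ n in (ω : Filter ℕ), ρ n < 1 := by
    apply hatTop
    exact hρ0.eventually (eventually_lt_nhds one_pos)
  have hGoodω : ∀ k, ∀ᶠ n in (ω : Filter ℕ), Good k n := by
    intro k
    have h2 : ∀ᶠ n in (ω : Filter ℕ), (k : ℝ) * ρ n ^ (1 / ((k : ℝ) + 1)) ≤ 1 := by
      apply hatTop
      have ht : Tendsto (fun n => (k : ℝ) * ρ n ^ (1 / ((k : ℝ) + 1))) atTop (nhds 0) := by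
        have hz : ((0 : ℝ)) ^ (1 / ((k : ℝ) + 1)) = 0 := Real.zero_rpow (ne_of_gt (hinv_pos k))
        have h := (hρ0.rpow_const (p := 1 / ((k : ℝ) + 1)) (Or.inr (hinv_pos k).le)).const_mul (k : ℝ)
        rw [hz, mul_zero] at h
        exact h
      exact ht.eventually (eventually_le_nhds one_pos)
    have h3 : ∀ᶠ n in (ω : Filter ℕ),
        ∀ j ∈ Finset.range k, ‖c (j + 1) n - c j n‖ ≤ ρ n ^ (q j - 1 / ((k : ℝ) + 1)) := by
      rw [eventually_all_finset]
      intro j hj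
      exact hnest j (1 / ((k : ℝ) + 1)) (hinv_pos k)
    filter_upwards [hρ1, h2, h3] with n h1 h2 h3
    exact ⟨h1, h2, fun j hj => h3 j (Finset.mem_range.2 hj)⟩
  -- the diagonal sequence
  set f : ℕ → ℕ := fun n => Nat.findGreatest (fun k => Good k n) n with hfdef
  set a : ℕ → ℂ := fun n => c (f n) n with hadef
  -- key estimate: on good points the diagonal stays in the balls
  have key : ∀ k m : ℕ, k ≤ m → ∀ n, m ≤ n → Good m n →
      ‖a n - c k n‖ ≤ ρ n ^ (q k - 2 / ((m : ℝ) + 1)) := by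
    intro k m hkm n hmn hGm
    have hfm : m ≤ f n := Nat.le_findGreatest (P := fun k => Good k n) hmn hGm
    have hGf : Good (f n) n := Nat.findGreatest_spec (P := fun k => Good k n) hmn hGm
    have hρp := hρpos n
    have hρlt1 := hGf.1
    have hkf : k ≤ f n := hkm.trans hfm
    -- telescoping
    have htel : a n - c k n = ∑ j ∈ Finset.Ico k (f n), (c (j + 1) n - c j n) := by
      rw [Finset.sum_Ico_eq_sub _ hkf]
      simp [Finset.sum_range_sub (fun j => c j n), hadef]
    have hsum : ‖a n - c k n‖
        ≤ ∑ j ∈ Finset.Ico k (f n), ‖c (j + 1) n - c j n‖ := by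
      rw [htel]
      exact norm_sum_le _ _
    have hterm : ∀ j ∈ Finset.Ico k (f n),
        ‖c (j + 1) n - c j n‖ ≤ ρ n ^ (q k - 1 / ((f n : ℝ) + 1)) := by
      intro j hj
      rw [Finset.mem_Ico] at hj
      refine (hGf.2.2 j hj.2).trans ?_
      apply Real.rpow_le_rpow_of_exponent_ge hρp hρlt1.le
      have := hq hj.1
      linarith
    have hcard : ‖a n - c k n‖
        ≤ (f n : ℝ) * ρ n ^ (q k - 1 / ((f n : ℝ) + 1)) := by
      refine hsum.trans ?_
      refine (Finset.sum_le_card_nsmul _ _ _ hterm).trans ?_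
      rw [nsmul_eq_mul, Nat.card_Ico]
      have hpow : (0 : ℝ) ≤ ρ n ^ (q k - 1 / ((f n : ℝ) + 1)) := Real.rpow_nonneg hρp.le _
      have : ((f n - k : ℕ) : ℝ) ≤ (f n : ℝ) := by
        exact_mod_cast Nat.cast_le.2 (Nat.sub_le _ _)
      nlinarith
    -- absorb the factor f n
    have hsplit : ρ n ^ (q k - 1 / ((f n : ℝ) + 1))
        = ρ n ^ (1 / ((f n : ℝ) + 1)) * ρ n ^ (q k - 2 / ((f n : ℝ) + 1)) := by
      rw [← Real.rpow_add hρp]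
      ring_nf
    have habs : (f n : ℝ) * ρ n ^ (q k - 1 / ((f n : ℝ) + 1))
        ≤ ρ n ^ (q k - 2 / ((f n : ℝ) + 1)) := by
      rw [hsplit, ← mul_assoc]
      have h1 : (f n : ℝ) * ρ n ^ (1 / ((f n : ℝ) + 1)) ≤ 1 := hGf.2.1
      have h2 : (0 : ℝ) ≤ ρ n ^ (q k - 2 / ((f n : ℝ) + 1)) := Real.rpow_nonneg hρp.le _
      nlinarith
    refine hcard.trans (habs.trans ?_)
    apply Real.rpow_le_rpow_of_exponent_ge hρp hρlt1.le
    have hmono : 2 / ((f n : ℝ) + 1) ≤ 2 / ((m : ℝ) + 1) := by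
      apply div_le_div_of_nonneg_left (by norm_num) (by positivity)
      exact_mod_cast Nat.succ_le_succ hfm
    linarith
  -- the balls property
  have hball : ∀ k, LeNormBall ω ρ (fun n => a n - c k n) (q k) := by
    intro k ε hε
    obtain ⟨m, hkm, hmε⟩ : ∃ m : ℕ, k ≤ m ∧ 2 / ((m : ℝ) + 1) ≤ ε := by
      refine ⟨max k ⌈2 / ε⌉₊, le_max_left _ _, ?_⟩
      have h2 : (⌈2 / ε⌉₊ : ℝ) ≤ ((max k ⌈2 / ε⌉₊ : ℕ) : ℝ) := by
        exact_mod_cast le_max_right k ⌈2 / ε⌉₊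
      have h1 : 2 / ε ≤ ((max k ⌈2 / ε⌉₊ : ℕ) : ℝ) + 1 := by
        have := Nat.le_ceil (2 / ε)
        linarith
      rw [div_le_iff₀ (by positivity)]
      have h3 := (div_le_iff₀ hε).1 h1
      nlinarith
    filter_upwards [hGoodω m, hatTop (eventually_ge_atTop m)] with n hGm hmn
    refine (key k m hkm n hmn hGm).trans ?_
    apply Real.rpow_le_rpow_of_exponent_ge (hρpos n) hGm.1.le
    linarith
  -- membership in M₀
  refine ⟨a, ?_, hball⟩
  obtain ⟨N, hN⟩ := hc 0
  set M : ℕ := N + ⌈1 - q 0⌉₊ with hMdef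
  refine ⟨M + 1, ?_⟩
  have hhalf : ∀ᶠ n in (ω : Filter ℕ), ρ n < 1 / 2 := by
    apply hatTop
    exact hρ0.eventually (eventually_lt_nhds (by norm_num))
  filter_upwards [hN, hball 0 1 one_pos, hρ1, hhalf] with n h1 h2 h3 h4
  have hρp := hρpos n
  have hNM : ρ n ^ (-(N : ℝ)) ≤ ρ n ^ (-(M : ℝ)) := by
    apply Real.rpow_le_rpow_of_exponent_ge hρp h3.le
    have : (N : ℝ) ≤ (M : ℝ) := by exact_mod_cast Nat.le_add_right N _
    linarith
  have hqM : ρ n ^ (q 0 - 1) ≤ ρ n ^ (-(M : ℝ)) := by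
    apply Real.rpow_le_rpow_of_exponent_ge hρp h3.le
    have h5 : (1 - q 0 : ℝ) ≤ (⌈1 - q 0⌉₊ : ℝ) := Nat.le_ceil _
    have h6 : ((⌈1 - q 0⌉₊ : ℕ) : ℝ) ≤ (M : ℝ) := by
      exact_mod_cast Nat.cast_le.2 (Nat.le_add_left _ _)
    linarith
  have hstep : (2 : ℝ) * ρ n ^ (-(M : ℝ)) < ρ n ^ (-((M : ℕ) + 1 : ℝ)) := by
    have hsplit : ρ n ^ (-((M : ℕ) + 1 : ℝ)) = ρ n ^ (-(1 : ℝ)) * ρ n ^ (-(M : ℝ)) := by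
      rw [← Real.rpow_add hρp]
      ring_nf
    rw [hsplit]
    have hpos : (0 : ℝ) < ρ n ^ (-(M : ℝ)) := Real.rpow_pos_of_pos hρp _
    have h2ρ : (2 : ℝ) < ρ n ^ (-(1 : ℝ)) := by
      rw [Real.rpow_neg_one, ← one_div, lt_div_iff₀ hρp]
      linarith
    nlinarith
  have htri : ‖a n‖ ≤ ‖c 0 n‖ + ‖a n - c 0 n‖ := by
    calc ‖a n‖ = ‖c 0 n + (a n - c 0 n)‖ := by ring_nf
      _ ≤ _ := norm_add_le _ _
  have : ‖a n‖ < 2 * ρ n ^ (-(M : ℝ)) := by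
    have := h2
    calc ‖a n‖ ≤ ‖c 0 n‖ + ‖a n - c 0 n‖ := htri
      _ < ρ n ^ (-(N : ℝ)) + ρ n ^ (q 0 - 1) := by
          exact add_lt_add_of_lt_of_le h1 h2
      _ ≤ ρ n ^ (-(M : ℝ)) + ρ n ^ (-(M : ℝ)) := add_le_add hNM hqM
      _ = 2 * ρ n ^ (-(M : ℝ)) := by ring
  calc ‖a n‖ < 2 * ρ n ^ (-(M : ℝ)) := this
    _ < ρ n ^ (-((M : ℕ) + 1 : ℝ)) := hstep
    _ = ρ n ^ (-((M + 1 : ℕ) : ℝ)) := by norm_num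
end

section
/- The complexified Robinson field ρℂ is algebraically closed: every monic polynomial z^d + a_{d−1}z^{d−1} + ... + a_0 with coefficients in ρℂ and d ≥ 1 has a root in ρℂ. -/
open Filter

/-- Every monic complex polynomial of positive degree (written as sequence of
coefficients) has a root. -/
lemma robinson_aux_exists_root (d : ℕ) (hd : 1 ≤ d) (a : ℕ → ℂ) :
    ∃ z : ℂ, z ^ d + ∑ j ∈ Finset.range d, a j * z ^ j = 0 := by
  set p : Polynomial ℂ :=
    Polynomial.X ^ d + ∑ j ∈ Finset.range d, Polynomial.C (a j) * Polynomial.X ^ j with hp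
  have hdegsum : (∑ j ∈ Finset.range d, Polynomial.C (a j) * Polynomial.X ^ j).degree
      < (Polynomial.X ^ d : Polynomial ℂ).degree := by
    rw [Polynomial.degree_X_pow]
    refine lt_of_le_of_lt (Polynomial.degree_sum_le _ _) ?_
    rw [Finset.sup_lt_iff (by exact_mod_cast WithBot.bot_lt_coe d)]
    intro j hj
    refine lt_of_le_of_lt (Polynomial.degree_C_mul_X_pow_le _ _) ?_
    exact_mod_cast Finset.mem_range.mp hj
  have hdeg : p.degree = d := by
    rw [hp, Polynomial.degree_add_eq_left_of_degree_lt hdegsum, Polynomial.degree_X_pow]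
  obtain ⟨z, hz⟩ := Complex.exists_root (f := p) (by
    rw [hdeg]; exact_mod_cast Nat.lt_of_lt_of_le Nat.zero_lt_one hd)
  refine ⟨z, ?_⟩
  have := hz
  simp only [Polynomial.IsRoot, hp, Polynomial.eval_add, Polynomial.eval_pow,
    Polynomial.eval_X, Polynomial.eval_finset_sum, Polynomial.eval_mul,
    Polynomial.eval_C] at this
  exact this

/-- Bound on roots of a monic polynomial. -/
lemma robinson_aux_root_bound (d : ℕ) (hd : 1 ≤ d) (a : ℕ → ℂ) (z : ℂ)
    (hz : z ^ d + ∑ j ∈ Finset.range d, a j * z ^ j = 0) :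
    ‖z‖ ≤ 1 + ∑ j ∈ Finset.range d, ‖a j‖ := by
  by_contra h
  push_neg at h
  set S := ∑ j ∈ Finset.range d, ‖a j‖ with hS
  have hS0 : 0 ≤ S := Finset.sum_nonneg fun j _ => norm_nonneg _
  have h1 : 1 ≤ ‖z‖ := by linarith
  have hSz : S < ‖z‖ := by linarith
  have hzd : z ^ d = -(∑ j ∈ Finset.range d, a j * z ^ j) := by
    linear_combination hz
  have key : ‖z‖ ^ d ≤ S * ‖z‖ ^ (d - 1) := by
    calc ‖z‖ ^ d = ‖z ^ d‖ := (norm_pow _ _).symm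
      _ = ‖∑ j ∈ Finset.range d, a j * z ^ j‖ := by rw [hzd, norm_neg]
      _ ≤ ∑ j ∈ Finset.range d, ‖a j * z ^ j‖ :=
          norm_sum_le _ _
      _ ≤ ∑ j ∈ Finset.range d, ‖a j‖ * ‖z‖ ^ (d - 1) := by
          refine Finset.sum_le_sum fun j hj => ?_
          rw [norm_mul, norm_pow]
          exact mul_le_mul_of_nonneg_left
            (pow_le_pow_right₀ h1 (Nat.le_sub_one_of_lt (Finset.mem_range.mp hj)))
            (norm_nonneg _)
      _ = S * ‖z‖ ^ (d - 1) := by rw [← Finset.sum_mul]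
  have hpow : 0 < ‖z‖ ^ (d - 1) := pow_pos (by linarith) _
  have : ‖z‖ ^ d = ‖z‖ * ‖z‖ ^ (d - 1) := by
    rw [← pow_succ']
    congr 1
    omega
  nlinarith

/-- The complexified Robinson field ρℂ = M₀/M₁ is algebraically closed: every
monic polynomial z^d + a_{d-1} z^{d-1} + ... + a_0 of degree d ≥ 1 with
coefficients in ρℂ (represented by sequences in M₀) has a root in ρℂ: there is
a sequence z in M₀ at which the polynomial evaluates to an element of M₁
(i.e. to zero in the quotient field). -/
theorem robinson_field_alg_closed
    (ω : Ultrafilter ℕ) (hω : ¬∃ a : ℕ, ω = pure a)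
    (ρ : ℕ → ℝ) (hρpos : ∀ n, 0 < ρ n) (hρ0 : Tendsto ρ atTop (nhds 0))
    (d : ℕ) (hd : 1 ≤ d) (a : ℕ → ℕ → ℂ)
    (ha : ∀ j < d, ∃ N : ℕ, ∀ᶠ n in (ω : Filter ℕ),
      ‖a j n‖ < ρ n ^ (-(N : ℝ))) :
    ∃ z : ℕ → ℂ,
      (∃ N : ℕ, ∀ᶠ n in (ω : Filter ℕ), ‖z n‖ < ρ n ^ (-(N : ℝ))) ∧
      ∀ N : ℕ, ∀ᶠ n in (ω : Filter ℕ),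
        ‖(z n) ^ d + ∑ j ∈ Finset.range d, a j n * (z n) ^ j‖
          < ρ n ^ (N : ℝ) := by
  -- choose an exact root for each n
  choose z hz using fun n => robinson_aux_exists_root d hd (fun j => a j n)
  refine ⟨z, ?_, ?_⟩
  · -- z is moderate
    -- choose exponents for the coefficients
    have ha' : ∀ j : ℕ, ∃ N : ℕ, ∀ᶠ n in (ω : Filter ℕ),
        j < d → ‖a j n‖ < ρ n ^ (-(N : ℝ)) := by
      intro j
      by_cases hj : j < d
      · obtain ⟨N, hN⟩ := ha j hj
        exact ⟨N, hN.mono fun n h _ => h⟩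
      · exact ⟨0, Eventually.of_forall fun n h => absurd h hj⟩
    choose Nf hNf using ha'
    set M : ℕ := (Finset.range d).sup Nf with hM
    refine ⟨M + 1, ?_⟩
    -- ω-eventual facts
    have hωcof : (ω : Filter ℕ) ≤ cofinite := by
      rcases ω.le_cofinite_or_eq_pure with h | h
      · exact h
      · exact absurd h hω
    have hωatTop : (ω : Filter ℕ) ≤ atTop := by rwa [← Nat.cofinite_eq_atTop]
    have hsmall : ∀ᶠ n in (ω : Filter ℕ), ρ n < 1 / (d + 1 : ℝ) := by
      apply hωatTop
      have := hρ0.eventually (eventually_lt_nhds (show (0:ℝ) < 1/(d+1:ℝ) by positivity))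
      exact this
    have hall : ∀ᶠ n in (ω : Filter ℕ), ∀ j ∈ Finset.range d,
        j < d → ‖a j n‖ < ρ n ^ (-(Nf j : ℝ)) :=
      (Finset.range d).eventually_all.mpr fun j _ => hNf j
    filter_upwards [hall, hsmall] with n hn hρn
    have hρ1 : ρ n ≤ 1 := by
      have : (1:ℝ)/(d+1:ℝ) ≤ 1 := by
        rw [div_le_one (by positivity)]
        have hdc : (0:ℝ) ≤ (d:ℝ) := Nat.cast_nonneg d
        linarith
      linarith
    have hρn0 := hρpos n
    -- each |a j n| < ρ n ^ (-M)
    have hbd : ∀ j ∈ Finset.range d, ‖a j n‖ < ρ n ^ (-(M : ℝ)) := by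
      intro j hj
      refine lt_of_lt_of_le (hn j hj (Finset.mem_range.mp hj)) ?_
      apply Real.rpow_le_rpow_of_exponent_ge hρn0 hρ1
      have : Nf j ≤ M := Finset.le_sup hj
      simp only [neg_le_neg_iff]
      exact_mod_cast this
    have hzb := robinson_aux_root_bound d hd (fun j => a j n) (z n) (hz n)
    have hsum : ∑ j ∈ Finset.range d, ‖a j n‖ < d * ρ n ^ (-(M : ℝ)) := by
      calc ∑ j ∈ Finset.range d, ‖a j n‖
          < ∑ _j ∈ Finset.range d, ρ n ^ (-(M : ℝ)) :=
            Finset.sum_lt_sum_of_nonempty (by simp; omega) hbd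
        _ = d * ρ n ^ (-(M : ℝ)) := by
            rw [Finset.sum_const, Finset.card_range, nsmul_eq_mul]
    have hMpos : (1:ℝ) ≤ ρ n ^ (-(M : ℝ)) := by
      rw [show (1:ℝ) = ρ n ^ (0:ℝ) by rw [Real.rpow_zero]]
      apply Real.rpow_le_rpow_of_exponent_ge hρn0 hρ1
      simp
    have hsplit : ρ n ^ (-((M:ℝ) + 1)) = ρ n ^ (-(M:ℝ)) * (ρ n)⁻¹ := by
      rw [show -((M:ℝ)+1) = -(M:ℝ) + (-1) by ring, Real.rpow_add hρn0,
        Real.rpow_neg_one]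
    have hinv : (d:ℝ) + 1 < (ρ n)⁻¹ := by
      rw [lt_inv_comm₀ (by positivity) hρn0]
      rw [inv_eq_one_div]
      exact hρn
    have hMnn : 0 < ρ n ^ (-(M : ℝ)) := Real.rpow_pos_of_pos hρn0 _
    have : ‖z n‖ < ρ n ^ (-((M:ℝ) + 1)) := by
      rw [hsplit]
      calc ‖z n‖ ≤ 1 + ∑ j ∈ Finset.range d, ‖a j n‖ := hzb
        _ < 1 + d * ρ n ^ (-(M : ℝ)) := by linarith
        _ ≤ ((d:ℝ) + 1) * ρ n ^ (-(M : ℝ)) := by nlinarith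
        _ < ρ n ^ (-(M : ℝ)) * (ρ n)⁻¹ := by
            rw [mul_comm]
            exact (mul_lt_mul_iff_right₀ hMnn).mpr hinv
    convert this using 3
    push_cast
    ring
  · intro N
    refine Eventually.of_forall fun n => ?_
    rw [hz n]
    simpa using Real.rpow_pos_of_pos (hρpos n) (N : ℝ)
end

section
/- The map Ψ sending a formal Puiseux series a = Σ_{j≥0} a_j t^{λ_j} to Σ_{j≥0} a_j ρ^{λ_j} ∈ ρℂ is an embedding of fields which preserves the non-Archimedean norms, i.e., Ψ is an injective ring homomorphism with |Ψ(a)|_{ρℂ} = |a|_𝕃 for all a ∈ 𝕃. -/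
open Filter

/-- An element of the field 𝕃 of formal Puiseux series Σ a_q t^q over ℂ,
recorded by its coefficient function ℚ → ℂ, whose support is finite below any
bound (so it is a series Σ_{j≥0} a_j t^{λ_j} with λ_j ∈ ℚ increasing to ∞, or a
finite sum).  Addition is pointwise and multiplication is convolution. -/
def PuiseuxFun : Type :=
  {f : ℚ → ℂ // ∀ M : ℝ, {q : ℚ | f q ≠ 0 ∧ (q : ℝ) ≤ M}.Finite}

namespace PuiseuxAux

noncomputable section
open Classical

/-- partial sum -/
def S (ρ : ℕ → ℝ) (f : PuiseuxFun) (n : ℕ) (M : ℝ) : ℂ :=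
  ∑ p ∈ (f.2 M).toFinset, f.1 p * ((ρ n ^ (p : ℝ) : ℝ) : ℂ)

def A (f : PuiseuxFun) (M : ℝ) : ℝ :=
  ∑ p ∈ (f.2 M).toFinset, ‖f.1 p‖

def cut (ρ : ℕ → ℝ) (f : PuiseuxFun) (n : ℕ) : ℕ :=
  Nat.findGreatest (fun m => A f m ≤ (ρ n)⁻¹) n

def psi (ρ : ℕ → ℝ) (f : PuiseuxFun) (n : ℕ) : ℂ := S ρ f n (cut ρ f n)

lemma mem_Fin {f : PuiseuxFun} {M : ℝ} {q : ℚ} :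
    q ∈ (f.2 M).toFinset ↔ f.1 q ≠ 0 ∧ (q : ℝ) ≤ M := Set.Finite.mem_toFinset _

lemma Fin_mono {f : PuiseuxFun} {M M' : ℝ} (h : M ≤ M') :
    (f.2 M).toFinset ⊆ (f.2 M').toFinset := by
  intro q hq
  rw [mem_Fin] at *
  exact ⟨hq.1, hq.2.trans h⟩

lemma A_nonneg (f : PuiseuxFun) (M : ℝ) : 0 ≤ A f M :=
  Finset.sum_nonneg fun p _ => norm_nonneg _

lemma A_mono (f : PuiseuxFun) {M M' : ℝ} (h : M ≤ M') : A f M ≤ A f M' :=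
  Finset.sum_le_sum_of_subset_of_nonneg (Fin_mono h)
    (fun p _ _ => norm_nonneg _)

/-- generic bound on sums -/
lemma abs_sum_le {r : ℝ} (h0 : 0 < r) (h1 : r ≤ 1) (f : PuiseuxFun) (s : Finset ℚ)
    {m : ℝ} (hm : ∀ p ∈ s, m ≤ (p : ℝ)) :
    ‖∑ p ∈ s, f.1 p * ((r ^ (p : ℝ) : ℝ) : ℂ)‖
      ≤ (∑ p ∈ s, ‖f.1 p‖) * r ^ m := by
  calc ‖∑ p ∈ s, f.1 p * ((r ^ (p : ℝ) : ℝ) : ℂ)‖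
      ≤ ∑ p ∈ s, ‖f.1 p * ((r ^ (p : ℝ) : ℝ) : ℂ)‖ :=
        norm_sum_le _ _
    _ ≤ ∑ p ∈ s, ‖f.1 p‖ * r ^ m := by
        refine Finset.sum_le_sum fun p hp => ?_
        rw [norm_mul, Complex.norm_real, Real.norm_eq_abs, abs_of_nonneg (Real.rpow_nonneg h0.le _)]
        exact mul_le_mul_of_nonneg_left
          (Real.rpow_le_rpow_of_exponent_ge h0 h1 (hm p hp))
          (norm_nonneg _)
    _ = (∑ p ∈ s, ‖f.1 p‖) * r ^ m := by rw [Finset.sum_mul]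

lemma S_abs_le {ρ : ℕ → ℝ} {n : ℕ} (h0 : 0 < ρ n) (h1 : ρ n ≤ 1) (f : PuiseuxFun)
    (M : ℝ) {m : ℝ} (hm : ∀ q : ℚ, f.1 q ≠ 0 → m ≤ (q : ℝ)) :
    ‖S ρ f n M‖ ≤ A f M * ρ n ^ m :=
  abs_sum_le h0 h1 f _ (fun p hp => hm p (mem_Fin.mp hp).1)

/-- existence of a nonpositive lower support bound -/
lemma exists_lb (f : PuiseuxFun) : ∃ m : ℝ, m ≤ 0 ∧ ∀ q : ℚ, f.1 q ≠ 0 → m ≤ (q : ℝ) := by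
  obtain ⟨m₀, hm₀⟩ := Finset.exists_le ((f.2 0).toFinset.image (fun q : ℚ => -(q : ℝ)))
  refine ⟨min (-m₀) 0, min_le_right _ _, fun q hq => ?_⟩
  rcases le_or_gt (q : ℝ) 0 with h | h
  · have : -(q:ℝ) ≤ m₀ := hm₀ _ (Finset.mem_image_of_mem _ (mem_Fin.mpr ⟨hq, h⟩))
    have := neg_le_neg this
    rw [neg_neg] at this
    exact (min_le_left _ _).trans this
  · exact (min_le_right _ _).trans h.le

section Ev
variable {ρ : ℕ → ℝ} (hρpos : ∀ n, 0 < ρ n) (hρ0 : Tendsto ρ atTop (nhds 0))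

include hρpos hρ0 in
lemma ev_inv_ge (C : ℝ) : ∀ᶠ n in atTop, C ≤ (ρ n)⁻¹ := by
  have h : Tendsto (fun n => (ρ n)⁻¹) atTop atTop :=
    tendsto_inv_nhdsGT_zero.comp
      (tendsto_nhdsWithin_iff.mpr ⟨hρ0, Eventually.of_forall fun n => hρpos n⟩)
  exact h.eventually_ge_atTop C

include hρpos hρ0 in
lemma ev_rpow_small (C D a b : ℝ) (hD : 0 < D) (hab : a < b) :
    ∀ᶠ n in atTop, C * ρ n ^ b < D * ρ n ^ a := by
  have hc : ContinuousAt (fun x : ℝ => x ^ (b - a)) 0 :=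
    Real.continuousAt_rpow_const 0 (b - a) (Or.inr (by linarith))
  have h0 : (fun x : ℝ => x ^ (b - a)) 0 = 0 := Real.zero_rpow (by linarith)
  have ht : Tendsto (fun n => C * ρ n ^ (b - a)) atTop (nhds 0) := by
    have h2 := (hc.tendsto.comp hρ0)
    rw [show (0:ℝ) ^ (b - a) = 0 from Real.zero_rpow (by linarith)] at h2
    simpa using h2.const_mul C
  have hev : ∀ᶠ n in atTop, C * ρ n ^ (b - a) < D := ht.eventually_lt_const hD
  filter_upwards [hev] with n hn
  have hpos : (0:ℝ) < ρ n ^ a := Real.rpow_pos_of_pos (hρpos n) a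
  calc C * ρ n ^ b = (C * ρ n ^ (b - a)) * ρ n ^ a := by
        rw [mul_assoc, ← Real.rpow_add (hρpos n)]; ring_nf
    _ < D * ρ n ^ a := by exact mul_lt_mul_of_pos_right hn hpos

include hρ0 in
lemma ev_rho_le_one : ∀ᶠ n in atTop, ρ n ≤ 1 := by
  filter_upwards [hρ0.eventually_lt_const one_pos] with n hn
  exact hn.le

include hρpos hρ0 in
lemma ev_cutA (f : PuiseuxFun) : ∀ᶠ n in atTop, A f (cut ρ f n) ≤ (ρ n)⁻¹ := by
  classical
  filter_upwards [ev_inv_ge hρpos hρ0 (A f 0)] with n hn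
  exact Nat.findGreatest_spec (m := 0) (P := fun m => A f m ≤ (ρ n)⁻¹) (Nat.zero_le n) (by simpa using hn)

include hρpos hρ0 in
lemma ev_cut_ge (f : PuiseuxFun) (m : ℕ) : ∀ᶠ n in atTop, m ≤ cut ρ f n := by
  classical
  filter_upwards [ev_inv_ge hρpos hρ0 (A f m), eventually_ge_atTop m] with n h1 h2
  exact Nat.le_findGreatest h2 (by simpa using h1)

end Ev

section Tail
variable {ρ : ℕ → ℝ} (hρpos : ∀ n, 0 < ρ n) (hρ0 : Tendsto ρ atTop (nhds 0))

lemma S_sub {n : ℕ} (f : PuiseuxFun) {M M' : ℝ} (h : M ≤ M') :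
    S ρ f n M' - S ρ f n M
      = ∑ p ∈ (f.2 M').toFinset \ (f.2 M).toFinset, f.1 p * ((ρ n ^ (p : ℝ) : ℝ) : ℂ) := by
  rw [Finset.sum_sdiff_eq_sub (Fin_mono h)]
  rfl

include hρpos hρ0 in
lemma tail (f : PuiseuxFun) (M : ℝ) :
    ∃ C μ : ℝ, M < μ ∧ ∀ᶠ n in atTop,
      ‖psi ρ f n - S ρ f n M‖ ≤ C * ρ n ^ μ := by
  classical
  set u : Finset ℚ := (f.2 (M + 2)).toFinset \ (f.2 M).toFinset with hu
  set μ₁ : ℝ := if h : u.Nonempty then (u.image (fun q : ℚ => (q : ℝ))).min'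
      (h.image _) else M + 1 with hμ₁
  have hμ₁M : M < μ₁ := by
    rw [hμ₁]
    split_ifs with h
    · obtain ⟨q, hq, hq'⟩ := Finset.mem_image.mp
        (Finset.min'_mem (u.image (fun q : ℚ => (q : ℝ))) (h.image _))
      rw [← hq']
      have := Finset.mem_sdiff.mp hq
      have h1 := (mem_Fin.mp this.1).1
      have h2 := this.2
      rw [mem_Fin] at h2
      push_neg at h2
      exact h2 h1
    · linarith
  refine ⟨A f (M + 2) + 1, min μ₁ (M + 1), lt_min hμ₁M (by linarith), ?_⟩
  set μ := min μ₁ (M + 1) with hμdef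
  filter_upwards [ev_rho_le_one hρ0, ev_cutA hρpos hρ0 f,
    ev_cut_ge hρpos hρ0 f (⌈M⌉₊ + 2)] with n h1 h2 h3
  have h0 : 0 < ρ n := hρpos n
  have hM2cut : M + 2 ≤ (cut ρ f n : ℝ) := by
    have hc : ((⌈M⌉₊ + 2 : ℕ) : ℝ) ≤ (cut ρ f n : ℝ) := by exact_mod_cast h3
    have hce := Nat.le_ceil M
    push_cast at hc
    linarith
  have hdec : psi ρ f n - S ρ f n M
      = (S ρ f n (cut ρ f n) - S ρ f n (M + 2)) + (S ρ f n (M + 2) - S ρ f n M) := by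
    rw [psi]; ring
  rw [hdec]
  have hb1 : ‖S ρ f n (cut ρ f n) - S ρ f n (M + 2)‖ ≤ 1 * ρ n ^ μ := by
    rw [S_sub f (by linarith : M + 2 ≤ (cut ρ f n : ℝ))]
    have hm : ∀ p ∈ (f.2 ((cut ρ f n : ℕ) : ℝ)).toFinset \ (f.2 (M + 2)).toFinset,
        M + 2 ≤ (p : ℝ) := by
      intro p hp
      have hsd := Finset.mem_sdiff.mp hp
      have hne := (mem_Fin.mp hsd.1).1
      have h2' := hsd.2
      rw [mem_Fin] at h2'
      push_neg at h2'
      exact (h2' hne).le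
    refine (abs_sum_le h0 h1 f _ hm).trans ?_
    have hsum : (∑ p ∈ (f.2 ((cut ρ f n : ℕ) : ℝ)).toFinset \ (f.2 (M + 2)).toFinset,
        ‖f.1 p‖) ≤ A f (cut ρ f n) :=
      Finset.sum_le_sum_of_subset_of_nonneg Finset.sdiff_subset
        (fun _ _ _ => norm_nonneg _)
    calc _ ≤ (ρ n)⁻¹ * ρ n ^ (M + 2) :=
          mul_le_mul_of_nonneg_right (hsum.trans h2) (Real.rpow_nonneg h0.le _)
      _ = ρ n ^ (M + 1) := by
          rw [← Real.rpow_neg_one (ρ n), ← Real.rpow_add h0]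
          ring_nf
      _ ≤ 1 * ρ n ^ μ := by
          rw [one_mul]
          exact Real.rpow_le_rpow_of_exponent_ge h0 h1 (min_le_right _ _)
  have hb2 : ‖S ρ f n (M + 2) - S ρ f n M‖ ≤ A f (M + 2) * ρ n ^ μ := by
    rw [S_sub f (by linarith : M ≤ M + 2)]
    have hm : ∀ p ∈ (f.2 (M + 2)).toFinset \ (f.2 M).toFinset, μ ≤ (p : ℝ) := by
      intro p hp
      have hne : u.Nonempty := ⟨p, hu ▸ hp⟩
      have : μ₁ ≤ (p : ℝ) := by
        rw [hμ₁, dif_pos hne]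
        exact Finset.min'_le _ _ (Finset.mem_image_of_mem _ (hu ▸ hp))
      exact (min_le_left _ _).trans this
    refine (abs_sum_le h0 h1 f _ hm).trans ?_
    refine mul_le_mul_of_nonneg_right ?_ (Real.rpow_nonneg h0.le _)
    exact Finset.sum_le_sum_of_subset_of_nonneg Finset.sdiff_subset
      (fun _ _ _ => norm_nonneg _)
  calc ‖_‖ ≤ _ := norm_add_le _ _
    _ ≤ 1 * ρ n ^ μ + A f (M + 2) * ρ n ^ μ := add_le_add hb1 hb2
    _ = (A f (M + 2) + 1) * ρ n ^ μ := by ring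


end Tail

section Alg
variable {ρ : ℕ → ℝ}

lemma S_ext {n : ℕ} (f : PuiseuxFun) (M : ℝ) {U : Finset ℚ}
    (hsub : (f.2 M).toFinset ⊆ U) (hle : ∀ q ∈ U, (q : ℝ) ≤ M) :
    S ρ f n M = ∑ p ∈ U, f.1 p * ((ρ n ^ (p : ℝ) : ℝ) : ℂ) := by
  refine Finset.sum_subset hsub fun q hq hq' => ?_
  have : f.1 q = 0 := by
    by_contra hc
    exact hq' (mem_Fin.mpr ⟨hc, hle q hq⟩)
  rw [this, zero_mul]

lemma S_add {n : ℕ} (f g h : PuiseuxFun) (hadd : ∀ q : ℚ, h.1 q = f.1 q + g.1 q) (M : ℝ) :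
    S ρ h n M = S ρ f n M + S ρ g n M := by
  set U := (f.2 M).toFinset ∪ (g.2 M).toFinset ∪ (h.2 M).toFinset with hU
  have hle : ∀ q ∈ U, (q : ℝ) ≤ M := by
    intro q hq
    rcases Finset.mem_union.mp hq with hq | hq
    · rcases Finset.mem_union.mp hq with hq | hq
      · exact (mem_Fin.mp hq).2
      · exact (mem_Fin.mp hq).2
    · exact (mem_Fin.mp hq).2
  rw [S_ext f M (by intro x hx; exact Finset.mem_union_left _ (Finset.mem_union_left _ hx)) hle,
    S_ext g M (by intro x hx; exact Finset.mem_union_left _ (Finset.mem_union_right _ hx)) hle,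
    S_ext h M (by intro x hx; exact Finset.mem_union_right _ hx) hle,
    ← Finset.sum_add_distrib]
  exact Finset.sum_congr rfl fun q _ => by rw [hadd q]; ring

end Alg

section Bounds
variable {ρ : ℕ → ℝ} (hρpos : ∀ n, 0 < ρ n) (hρ0 : Tendsto ρ atTop (nhds 0))

lemma exists_min (f : PuiseuxFun) (hne : ∃ q : ℚ, f.1 q ≠ 0) :
    ∃ μ₀ : ℚ, f.1 μ₀ ≠ 0 ∧ ∀ q : ℚ, f.1 q ≠ 0 → μ₀ ≤ q := by
  obtain ⟨q₀, hq₀⟩ := hne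
  have hq₀F : q₀ ∈ (f.2 ((q₀ : ℝ))).toFinset := mem_Fin.mpr ⟨hq₀, le_refl _⟩
  set F := (f.2 ((q₀ : ℝ))).toFinset with hF
  refine ⟨F.min' ⟨q₀, hq₀F⟩, (mem_Fin.mp (F.min'_mem ⟨q₀, hq₀F⟩)).1, fun q hq => ?_⟩
  rcases le_or_gt q q₀ with h | h
  · exact F.min'_le q (mem_Fin.mpr ⟨hq, by exact_mod_cast h⟩)
  · exact ((F.min'_le q₀ hq₀F).trans h.le)

lemma S_min {n : ℕ} (f : PuiseuxFun) (μ₀ : ℚ) (h1 : f.1 μ₀ ≠ 0)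
    (h2 : ∀ q : ℚ, f.1 q ≠ 0 → μ₀ ≤ q) :
    S ρ f n ((μ₀ : ℝ)) = f.1 μ₀ * ((ρ n ^ ((μ₀ : ℚ) : ℝ) : ℝ) : ℂ) := by
  have : (f.2 ((μ₀ : ℝ))).toFinset = {μ₀} := by
    ext q
    rw [mem_Fin, Finset.mem_singleton]
    constructor
    · rintro ⟨hq, hle⟩
      exact le_antisymm (by exact_mod_cast hle) (h2 q hq)
    · rintro rfl
      exact ⟨h1, le_refl _⟩
  rw [S, this, Finset.sum_singleton]

include hρpos hρ0 in
lemma psi_bounds (f : PuiseuxFun) (hne : ∃ q : ℚ, f.1 q ≠ 0) :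
    ∃ (μ₀ : ℚ) (c : ℝ), 0 < c ∧ f.1 μ₀ ≠ 0 ∧ (∀ q : ℚ, f.1 q ≠ 0 → μ₀ ≤ q) ∧
      ∀ᶠ n in atTop, c * ρ n ^ ((μ₀ : ℚ) : ℝ) ≤ ‖psi ρ f n‖ ∧
        ‖psi ρ f n‖ ≤ (4 * c) * ρ n ^ ((μ₀ : ℚ) : ℝ) := by
  obtain ⟨μ₀, h1, h2⟩ := exists_min f hne
  set c := ‖f.1 μ₀‖ / 2 with hc
  have hcpos : 0 < c := by
    have := (norm_pos_iff.mpr h1)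
    positivity
  obtain ⟨C, μ, hμ, hev⟩ := tail hρpos hρ0 f ((μ₀ : ℝ))
  refine ⟨μ₀, c, hcpos, h1, h2, ?_⟩
  filter_upwards [hev, ev_rpow_small hρpos hρ0 C c ((μ₀ : ℚ) : ℝ) μ hcpos hμ] with n hn hsm
  have h0 : 0 < ρ n := hρpos n
  have hS : ‖S ρ f n ((μ₀ : ℝ))‖ = 2 * c * ρ n ^ ((μ₀ : ℚ) : ℝ) := by
    rw [S_min f μ₀ h1 h2, norm_mul, Complex.norm_real, Real.norm_eq_abs,
      abs_of_nonneg (Real.rpow_nonneg h0.le _), hc]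
    ring
  have hE : ‖psi ρ f n - S ρ f n ((μ₀ : ℝ))‖ ≤ C * ρ n ^ μ := hn
  have hEc : ‖psi ρ f n - S ρ f n ((μ₀ : ℝ))‖ < c * ρ n ^ ((μ₀ : ℚ) : ℝ) :=
    lt_of_le_of_lt hE hsm
  have hrp : (0:ℝ) < c * ρ n ^ ((μ₀ : ℚ) : ℝ) := by positivity
  constructor
  · have htri : ‖S ρ f n ((μ₀ : ℝ))‖
        ≤ ‖psi ρ f n‖ + ‖psi ρ f n - S ρ f n ((μ₀ : ℝ))‖ := by
      have := norm_add_le (psi ρ f n - S ρ f n ((μ₀ : ℝ))) (S ρ f n ((μ₀ : ℝ)))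
      simp only [sub_add_cancel] at this
      calc ‖S ρ f n ((μ₀ : ℝ))‖
          ≤ ‖psi ρ f n‖ + ‖S ρ f n ((μ₀ : ℝ)) - psi ρ f n‖ := by
            have h' := norm_add_le (psi ρ f n) (S ρ f n ((μ₀ : ℝ)) - psi ρ f n)
            simpa using h'
        _ = ‖psi ρ f n‖ + ‖psi ρ f n - S ρ f n ((μ₀ : ℝ))‖ := by
            rw [← norm_sub_rev]
    rw [hS] at htri
    linarith
  · have htri : ‖psi ρ f n‖
        ≤ ‖S ρ f n ((μ₀ : ℝ))‖ + ‖psi ρ f n - S ρ f n ((μ₀ : ℝ))‖ := by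
      have h' := norm_add_le (S ρ f n ((μ₀ : ℝ))) (psi ρ f n - S ρ f n ((μ₀ : ℝ)))
      simpa using h'
    rw [hS] at htri
    linarith

end Bounds

section Mult
variable {ρ : ℕ → ℝ}

lemma mult_main (f g h : PuiseuxFun)
    (hmul : ∀ q : ℚ, h.1 q = ∑ᶠ p : ℚ, f.1 p * g.1 (q - p))
    {mf mg : ℝ} (hmf : ∀ q : ℚ, f.1 q ≠ 0 → mf ≤ (q : ℝ))
    (hmg : ∀ q : ℚ, g.1 q ≠ 0 → mg ≤ (q : ℝ))
    {Mh Mf Mg : ℝ} (hMf : Mh - mg ≤ Mf) (hMg : Mh - mf ≤ Mg)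
    {n : ℕ} (h0 : 0 < ρ n) (h1 : ρ n ≤ 1) :
    ‖S ρ h n Mh - S ρ f n Mf * S ρ g n Mg‖ ≤ A f Mf * A g Mg * ρ n ^ Mh := by
  classical
  set r := ρ n with hr
  set Ff := (f.2 Mf).toFinset with hFf
  set Fg := (g.2 Mg).toFinset with hFg
  set term : ℚ × ℚ → ℂ :=
    fun pp => f.1 pp.1 * g.1 pp.2 * ((r ^ ((pp.1 : ℝ) + (pp.2 : ℝ)) : ℝ) : ℂ) with hterm
  set cond : ℚ × ℚ → Prop := fun pp => (pp.1 : ℝ) + (pp.2 : ℝ) ≤ Mh with hcond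
  have hprod : S ρ f n Mf * S ρ g n Mg = ∑ pp ∈ Ff ×ˢ Fg, term pp := by
    rw [S, S, Finset.sum_mul_sum, ← Finset.sum_product']
    refine Finset.sum_congr rfl fun pp _ => ?_
    rw [hterm]
    simp only
    rw [Real.rpow_add h0]
    push_cast
    ring
  have hsplit : ∑ pp ∈ Ff ×ˢ Fg, term pp
      = (∑ pp ∈ (Ff ×ˢ Fg).filter cond, term pp)
        + ∑ pp ∈ (Ff ×ˢ Fg).filter (fun pp => ¬ cond pp), term pp :=
    (Finset.sum_filter_add_sum_filter_not _ _ _).symm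
  set R := (Ff ×ˢ Fg).filter cond with hRdef
  set Q := (h.2 Mh).toFinset ∪ R.image (fun pp => pp.1 + pp.2) with hQ
  have hQle : ∀ q ∈ Q, (q : ℝ) ≤ Mh := by
    intro q hq
    rcases Finset.mem_union.mp hq with hq | hq
    · exact (mem_Fin.mp hq).2
    · obtain ⟨pp, hpp, rfl⟩ := Finset.mem_image.mp hq
      have hc := (Finset.mem_filter.mp hpp).2
      rw [hcond] at hc
      push_cast
      exact hc
  have hmain : (∑ pp ∈ R, term pp) = S ρ h n Mh := by
    have hstep1 : S ρ h n Mh = ∑ q ∈ Q, h.1 q * ((r ^ (q : ℝ) : ℝ) : ℂ) :=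
      S_ext h Mh Finset.subset_union_left hQle
    have hconv : ∀ q ∈ Q, h.1 q = ∑ p ∈ Ff, f.1 p * g.1 (q - p) := by
      intro q hq
      rw [hmul q]
      refine finsum_eq_sum_of_support_subset _ ?_
      intro p hp
      rw [Function.mem_support] at hp
      have hf : f.1 p ≠ 0 := fun hz => hp (by rw [hz, zero_mul])
      have hg : g.1 (q - p) ≠ 0 := fun hz => hp (by rw [hz, mul_zero])
      have hq1 := hQle q hq
      have hq2 := hmg _ hg
      push_cast at hq2
      exact Finset.mem_coe.mpr (mem_Fin.mpr ⟨hf, by linarith⟩)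
    have hstep2 : S ρ h n Mh = ∑ qp ∈ Q ×ˢ Ff,
        f.1 qp.2 * g.1 (qp.1 - qp.2) * ((r ^ ((qp.1 : ℚ) : ℝ) : ℝ) : ℂ) := by
      calc S ρ h n Mh = ∑ q ∈ Q, h.1 q * ((r ^ (q : ℝ) : ℝ) : ℂ) := hstep1
        _ = ∑ q ∈ Q, ∑ p ∈ Ff, f.1 p * g.1 (q - p) * ((r ^ (q : ℝ) : ℝ) : ℂ) :=
            Finset.sum_congr rfl fun q hq => by rw [hconv q hq, Finset.sum_mul]
        _ = ∑ qp ∈ Q ×ˢ Ff, f.1 qp.2 * g.1 (qp.1 - qp.2) * ((r ^ ((qp.1 : ℚ) : ℝ) : ℝ) : ℂ) := by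
            rw [← Finset.sum_product']
    rw [hstep2]
    have hLfilt : (∑ qp ∈ (Q ×ˢ Ff).filter (fun qp => f.1 qp.2 * g.1 (qp.1 - qp.2) ≠ 0),
          f.1 qp.2 * g.1 (qp.1 - qp.2) * ((r ^ ((qp.1 : ℚ) : ℝ) : ℝ) : ℂ))
        = ∑ qp ∈ Q ×ˢ Ff,
          f.1 qp.2 * g.1 (qp.1 - qp.2) * ((r ^ ((qp.1 : ℚ) : ℝ) : ℝ) : ℂ) := by
      refine Finset.sum_filter_of_ne fun qp _ hne => ?_
      intro hz
      exact hne (by rw [hz, zero_mul])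
    have hRfilt : (∑ pp ∈ R.filter (fun pp => f.1 pp.1 * g.1 pp.2 ≠ 0), term pp)
        = ∑ pp ∈ R, term pp := by
      refine Finset.sum_filter_of_ne fun pp _ hne => ?_
      intro hz
      exact hne (by rw [hterm]; simp only; rw [hz, zero_mul])
    rw [← hRfilt, ← hLfilt]
    refine Finset.sum_nbij' (fun pp => (pp.1 + pp.2, pp.1)) (fun qp => (qp.2, qp.1 - qp.2))
      ?_ ?_ ?_ ?_ ?_
    · intro pp hpp
      obtain ⟨hppR, hppne⟩ := Finset.mem_filter.mp hpp
      obtain ⟨hppmem, hppc⟩ := Finset.mem_filter.mp hppR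
      refine Finset.mem_filter.mpr ⟨Finset.mem_product.mpr
        ⟨Finset.mem_union_right _ (Finset.mem_image_of_mem _ hppR),
          (Finset.mem_product.mp hppmem).1⟩, ?_⟩
      simpa using hppne
    · intro qp hqp
      obtain ⟨hqpmem, hqpne⟩ := Finset.mem_filter.mp hqp
      obtain ⟨hq, hp⟩ := Finset.mem_product.mp hqpmem
      have hfne : f.1 qp.2 ≠ 0 := fun hz => hqpne (by rw [hz, zero_mul])
      have hgne : g.1 (qp.1 - qp.2) ≠ 0 := fun hz => hqpne (by rw [hz, mul_zero])
      have hq1 := hQle _ hq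
      have hq2 := hmf _ hfne
      refine Finset.mem_filter.mpr ⟨Finset.mem_filter.mpr ⟨Finset.mem_product.mpr
        ⟨hp, mem_Fin.mpr ⟨hgne, by push_cast; linarith⟩⟩, ?_⟩, hqpne⟩
      rw [hcond]
      push_cast
      simpa using hq1
    · intro pp _
      simp
    · intro qp _
      simp
    · intro pp hpp
      rw [hterm]
      simp only [add_sub_cancel_left]
      push_cast
      ring_nf
  have hrem : ‖∑ pp ∈ (Ff ×ˢ Fg).filter (fun pp => ¬ cond pp), term pp‖
      ≤ A f Mf * A g Mg * r ^ Mh := by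
    calc ‖∑ pp ∈ (Ff ×ˢ Fg).filter (fun pp => ¬ cond pp), term pp‖
        ≤ ∑ pp ∈ (Ff ×ˢ Fg).filter (fun pp => ¬ cond pp), ‖term pp‖ :=
          norm_sum_le _ _
      _ ≤ ∑ pp ∈ (Ff ×ˢ Fg).filter (fun pp => ¬ cond pp),
          ‖f.1 pp.1‖ * ‖g.1 pp.2‖ * r ^ Mh := by
          refine Finset.sum_le_sum fun pp hpp => ?_
          have hnc := (Finset.mem_filter.mp hpp).2
          rw [hcond] at hnc
          simp only [not_le] at hnc
          rw [hterm]
          simp only [norm_mul, Complex.norm_real, Real.norm_eq_abs,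
            abs_of_nonneg (Real.rpow_nonneg h0.le _)]
          refine mul_le_mul_of_nonneg_left
            (Real.rpow_le_rpow_of_exponent_ge h0 h1 hnc.le) ?_
          positivity
      _ ≤ ∑ pp ∈ Ff ×ˢ Fg,
          ‖f.1 pp.1‖ * ‖g.1 pp.2‖ * r ^ Mh :=
          Finset.sum_le_sum_of_subset_of_nonneg (Finset.filter_subset _ _)
            (fun pp _ _ => by positivity)
      _ = A f Mf * A g Mg * r ^ Mh := by
          rw [← Finset.sum_mul, A, A, Finset.sum_mul_sum, ← Finset.sum_product']
  have hkey : S ρ h n Mh - S ρ f n Mf * S ρ g n Mg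
      = -(∑ pp ∈ (Ff ×ˢ Fg).filter (fun pp => ¬ cond pp), term pp) := by
    rw [hprod, hsplit, hmain]
    ring
  rw [hkey, norm_neg]
  exact hrem

end Mult

end

end PuiseuxAux

open PuiseuxAux

/-- The map Ψ : 𝕃 → ρℂ, a = Σ a_j t^{λ_j} ↦ Σ a_j ρ^{λ_j}, is an embedding of
fields preserving the non-Archimedean norms: Ψ(a) is the ν-limit of the partial
sums of Σ a_j ρ^{λ_j}; Ψ is additive and multiplicative (modulo M₁, i.e. as a
map to ρℂ = M₀/M₁), injective (nonzero series have Ψ-image nonzero in ρℂ), and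
ν(Ψ(a)) = min{λ_j : a_j ≠ 0}, i.e. |Ψ(a)|_{ρℂ} = |a|_𝕃. -/
theorem puiseux_embedding
    (ω : Ultrafilter ℕ) (hω : ¬∃ a : ℕ, ω = pure a)
    (ρ : ℕ → ℝ) (hρpos : ∀ n, 0 < ρ n) (hρ0 : Tendsto ρ atTop (nhds 0)) :
    ∃ Ψ : PuiseuxFun → (ℕ → ℂ),
      -- Ψ f represents an element of ρℂ:
      (∀ f : PuiseuxFun, ∃ N : ℕ, ∀ᶠ n in (ω : Filter ℕ),
        ‖Ψ f n‖ < ρ n ^ (-(N : ℝ))) ∧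
      -- Ψ f is the sum of the series Σ a_j ρ^{λ_j} in ρℂ:
      (∀ f : PuiseuxFun, ∀ q : ℝ, ∃ M : ℝ,
        LeNormBall ω ρ
          (fun n => Ψ f n -
            ∑ p ∈ (f.2 M).toFinset, f.1 p * ((ρ n ^ (p : ℝ) : ℝ) : ℂ)) q) ∧
      -- Ψ is additive:
      (∀ f g h : PuiseuxFun, (∀ q : ℚ, h.1 q = f.1 q + g.1 q) →
        ∀ N : ℕ, ∀ᶠ n in (ω : Filter ℕ),
          ‖Ψ h n - (Ψ f n + Ψ g n)‖ < ρ n ^ (N : ℝ)) ∧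
      -- Ψ is multiplicative:
      (∀ f g h : PuiseuxFun, (∀ q : ℚ, h.1 q = ∑ᶠ p : ℚ, f.1 p * g.1 (q - p)) →
        ∀ N : ℕ, ∀ᶠ n in (ω : Filter ℕ),
          ‖Ψ h n - Ψ f n * Ψ g n‖ < ρ n ^ (N : ℝ)) ∧
      -- Ψ is injective:
      (∀ f : PuiseuxFun, (∃ q : ℚ, f.1 q ≠ 0) →
        ¬ ∀ N : ℕ, ∀ᶠ n in (ω : Filter ℕ),
          ‖Ψ f n‖ < ρ n ^ (N : ℝ)) ∧
      -- Ψ preserves the non-Archimedean norms: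
      (∀ f : PuiseuxFun, (∃ q : ℚ, f.1 q ≠ 0) →
        OmegaLim ω (fun n => Real.log (‖Ψ f n‖) / Real.log (ρ n))
          (sInf {x : ℝ | ∃ q : ℚ, f.1 q ≠ 0 ∧ (q : ℝ) = x})) := by
  classical
  have hle : (ω : Filter ℕ) ≤ atTop := by
    rcases ω.le_cofinite_or_eq_pure with h | h
    · rwa [Nat.cofinite_eq_atTop] at h
    · exact absurd h hω
  have hup : ∀ {P : ℕ → Prop}, (∀ᶠ n in atTop, P n) → ∀ᶠ n in (ω : Filter ℕ), P n :=
    fun h => h.filter_mono hle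
  have tri : ∀ a b : ℂ, ‖a - b‖ ≤ ‖a‖ + ‖b‖ := fun a b => by
    simpa [sub_eq_add_neg] using norm_add_le a (-b)
  refine ⟨psi ρ, ?_, ?_, ?_, ?_, ?_, ?_⟩
  · -- membership in M₀
    intro f
    by_cases hne : ∃ q : ℚ, f.1 q ≠ 0
    · obtain ⟨μ₀, c, hc, h1, h2, hev⟩ := psi_bounds hρpos hρ0 f hne
      obtain ⟨N, hN⟩ := exists_nat_gt (-((μ₀ : ℚ) : ℝ))
      refine ⟨N, hup ?_⟩
      filter_upwards [hev, ev_rpow_small hρpos hρ0 (4 * c) 1 (-(N : ℝ)) ((μ₀ : ℚ) : ℝ)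
        one_pos (by linarith)] with n hb hs
      calc ‖psi ρ f n‖ ≤ 4 * c * ρ n ^ ((μ₀ : ℚ) : ℝ) := hb.2
        _ < 1 * ρ n ^ (-(N : ℝ)) := hs
        _ = ρ n ^ (-(N : ℝ)) := one_mul _
    · push_neg at hne
      refine ⟨0, hup (Eventually.of_forall fun n => ?_)⟩
      have hz : psi ρ f n = 0 := by
        rw [psi, S]
        exact Finset.sum_eq_zero fun p _ => by rw [hne p, zero_mul]
      rw [hz, norm_zero]
      exact Real.rpow_pos_of_pos (hρpos n) _
  · -- limit of partial sums
    intro f q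
    obtain ⟨C, μ, hμ, hev⟩ := tail hρpos hρ0 f q
    refine ⟨q, fun ε hε => hup ?_⟩
    filter_upwards [hev, ev_rpow_small hρpos hρ0 C 1 (q - ε) μ one_pos (by linarith)]
      with n h1 h2
    show ‖psi ρ f n - S ρ f n q‖ ≤ ρ n ^ (q - ε)
    calc ‖psi ρ f n - S ρ f n q‖ ≤ C * ρ n ^ μ := h1
      _ ≤ 1 * ρ n ^ (q - ε) := h2.le
      _ = ρ n ^ (q - ε) := one_mul _
  · -- additivity
    intro f g h hadd N
    obtain ⟨Cf, μf, hμf, hevf⟩ := tail hρpos hρ0 f (N : ℝ)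
    obtain ⟨Cg, μg, hμg, hevg⟩ := tail hρpos hρ0 g (N : ℝ)
    obtain ⟨Ch, μh, hμh, hevh⟩ := tail hρpos hρ0 h (N : ℝ)
    refine hup ?_
    filter_upwards [hevf, hevg, hevh,
      ev_rpow_small hρpos hρ0 Cf (1/3) (N : ℝ) μf (by norm_num) hμf,
      ev_rpow_small hρpos hρ0 Cg (1/3) (N : ℝ) μg (by norm_num) hμg,
      ev_rpow_small hρpos hρ0 Ch (1/3) (N : ℝ) μh (by norm_num) hμh]
      with n h1 h2 h3 h4 h5 h6
    have hid : psi ρ h n - (psi ρ f n + psi ρ g n)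
        = (psi ρ h n - S ρ h n (N : ℝ)) - (psi ρ f n - S ρ f n (N : ℝ))
          - (psi ρ g n - S ρ g n (N : ℝ)) := by
      rw [S_add f g h hadd (N : ℝ)]
      ring
    rw [hid]
    have e1 := h1.trans_lt h4
    have e2 := h2.trans_lt h5
    have e3 := h3.trans_lt h6
    calc ‖_‖
        ≤ ‖(psi ρ h n - S ρ h n (N : ℝ)) - (psi ρ f n - S ρ f n (N : ℝ))‖
          + ‖psi ρ g n - S ρ g n (N : ℝ)‖ := tri _ _
      _ ≤ ‖psi ρ h n - S ρ h n (N : ℝ)‖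
          + ‖psi ρ f n - S ρ f n (N : ℝ)‖
          + ‖psi ρ g n - S ρ g n (N : ℝ)‖ := by
          have := tri (psi ρ h n - S ρ h n (N : ℝ)) (psi ρ f n - S ρ f n (N : ℝ))
          linarith
      _ < ρ n ^ (N : ℝ) := by linarith
  · -- multiplicativity
    intro f g h hmul N
    obtain ⟨mf, hmf0, hmf⟩ := exists_lb f
    obtain ⟨mg, hmg0, hmg⟩ := exists_lb g
    set Mh : ℝ := (N : ℝ) + 1 with hMhdef
    set Mf : ℝ := Mh - mg with hMfdef
    set Mg : ℝ := Mh - mf with hMgdef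
    have hN0 : (0 : ℝ) ≤ (N : ℝ) := Nat.cast_nonneg N
    obtain ⟨Cf, μf, hμf, hevf⟩ := tail hρpos hρ0 f Mf
    obtain ⟨Cg, μg, hμg, hevg⟩ := tail hρpos hρ0 g Mg
    obtain ⟨Ch, μh, hμh, hevh⟩ := tail hρpos hρ0 h Mh
    refine hup ?_
    filter_upwards [hevf, hevg, hevh, ev_rho_le_one hρ0,
      ev_rpow_small hρpos hρ0 Ch (1/5) (N : ℝ) μh (by norm_num) (by simp only [hMhdef] at hμh ⊢; linarith),
      ev_rpow_small hρpos hρ0 (A f Mf * A g Mg) (1/5) (N : ℝ) Mh (by norm_num) (by simp only [hMhdef]; linarith),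
      ev_rpow_small hρpos hρ0 (Cf * A g Mg) (1/5) (N : ℝ) (μf + mg) (by norm_num) (by simp only [hMfdef, hMhdef] at hμf ⊢; linarith),
      ev_rpow_small hρpos hρ0 (A f Mf * Cg) (1/5) (N : ℝ) (mf + μg) (by norm_num) (by simp only [hMgdef, hMhdef] at hμg ⊢; linarith),
      ev_rpow_small hρpos hρ0 (Cf * Cg) (1/5) (N : ℝ) (μf + μg) (by norm_num) (by simp only [hMfdef, hMgdef, hMhdef] at hμf hμg ⊢; linarith)]
      with n h1 h2 h3 hone h4 h5 h6 h7 h8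
    have h0 := hρpos n
    have hmain := mult_main (ρ := ρ) f g h hmul hmf hmg (Mh := Mh) (Mf := Mf)
      (Mg := Mg) (le_of_eq rfl) (le_of_eq rfl) h0 hone
    have hSf : ‖S ρ f n Mf‖ ≤ A f Mf * ρ n ^ mf := S_abs_le h0 hone f Mf hmf
    have hSg : ‖S ρ g n Mg‖ ≤ A g Mg * ρ n ^ mg := S_abs_le h0 hone g Mg hmg
    have hid : psi ρ h n - psi ρ f n * psi ρ g n
        = (psi ρ h n - S ρ h n Mh)
          + (S ρ h n Mh - S ρ f n Mf * S ρ g n Mg)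
          - (psi ρ f n - S ρ f n Mf) * S ρ g n Mg
          - S ρ f n Mf * (psi ρ g n - S ρ g n Mg)
          - (psi ρ f n - S ρ f n Mf) * (psi ρ g n - S ρ g n Mg) := by ring
    rw [hid]
    have habs0 : ∀ z : ℂ, 0 ≤ ‖z‖ := fun z => norm_nonneg z
    have b3 : ‖(psi ρ f n - S ρ f n Mf) * S ρ g n Mg‖
        ≤ Cf * A g Mg * ρ n ^ (μf + mg) := by
      rw [norm_mul, Real.rpow_add h0]
      calc ‖psi ρ f n - S ρ f n Mf‖ * ‖S ρ g n Mg‖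
          ≤ (Cf * ρ n ^ μf) * (A g Mg * ρ n ^ mg) :=
            mul_le_mul h1 hSg (habs0 _) ((habs0 _).trans h1)
        _ = Cf * A g Mg * (ρ n ^ μf * ρ n ^ mg) := by ring
    have b4 : ‖S ρ f n Mf * (psi ρ g n - S ρ g n Mg)‖
        ≤ A f Mf * Cg * ρ n ^ (mf + μg) := by
      rw [norm_mul, Real.rpow_add h0]
      calc ‖S ρ f n Mf‖ * ‖psi ρ g n - S ρ g n Mg‖
          ≤ (A f Mf * ρ n ^ mf) * (Cg * ρ n ^ μg) :=
            mul_le_mul hSf h2 (habs0 _) ((habs0 _).trans hSf)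
        _ = A f Mf * Cg * (ρ n ^ mf * ρ n ^ μg) := by ring
    have b5 : ‖(psi ρ f n - S ρ f n Mf) * (psi ρ g n - S ρ g n Mg)‖
        ≤ Cf * Cg * ρ n ^ (μf + μg) := by
      rw [norm_mul, Real.rpow_add h0]
      calc ‖psi ρ f n - S ρ f n Mf‖ * ‖psi ρ g n - S ρ g n Mg‖
          ≤ (Cf * ρ n ^ μf) * (Cg * ρ n ^ μg) :=
            mul_le_mul h1 h2 (habs0 _) ((habs0 _).trans h1)
        _ = Cf * Cg * (ρ n ^ μf * ρ n ^ μg) := by ring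
    have hb7 : A f Mf * Cg * ρ n ^ (mf + μg) < 1/5 * ρ n ^ (N : ℝ) := by
      have : (A f Mf * Cg) * ρ n ^ (mf + μg) < 1/5 * ρ n ^ (N : ℝ) := h7
      linarith
    calc ‖_‖
        ≤ ‖(psi ρ h n - S ρ h n Mh)
            + (S ρ h n Mh - S ρ f n Mf * S ρ g n Mg)
            - (psi ρ f n - S ρ f n Mf) * S ρ g n Mg
            - S ρ f n Mf * (psi ρ g n - S ρ g n Mg)‖
          + ‖(psi ρ f n - S ρ f n Mf) * (psi ρ g n - S ρ g n Mg)‖ := tri _ _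
      _ ≤ ‖(psi ρ h n - S ρ h n Mh)
            + (S ρ h n Mh - S ρ f n Mf * S ρ g n Mg)
            - (psi ρ f n - S ρ f n Mf) * S ρ g n Mg‖
          + ‖S ρ f n Mf * (psi ρ g n - S ρ g n Mg)‖
          + ‖(psi ρ f n - S ρ f n Mf) * (psi ρ g n - S ρ g n Mg)‖ := by
          have := tri ((psi ρ h n - S ρ h n Mh)
            + (S ρ h n Mh - S ρ f n Mf * S ρ g n Mg)
            - (psi ρ f n - S ρ f n Mf) * S ρ g n Mg)
            (S ρ f n Mf * (psi ρ g n - S ρ g n Mg))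
          linarith
      _ ≤ ‖(psi ρ h n - S ρ h n Mh)
            + (S ρ h n Mh - S ρ f n Mf * S ρ g n Mg)‖
          + ‖(psi ρ f n - S ρ f n Mf) * S ρ g n Mg‖
          + ‖S ρ f n Mf * (psi ρ g n - S ρ g n Mg)‖
          + ‖(psi ρ f n - S ρ f n Mf) * (psi ρ g n - S ρ g n Mg)‖ := by
          have := tri ((psi ρ h n - S ρ h n Mh)
            + (S ρ h n Mh - S ρ f n Mf * S ρ g n Mg))
            ((psi ρ f n - S ρ f n Mf) * S ρ g n Mg)
          linarith
      _ ≤ ‖psi ρ h n - S ρ h n Mh‖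
          + ‖S ρ h n Mh - S ρ f n Mf * S ρ g n Mg‖
          + ‖(psi ρ f n - S ρ f n Mf) * S ρ g n Mg‖
          + ‖S ρ f n Mf * (psi ρ g n - S ρ g n Mg)‖
          + ‖(psi ρ f n - S ρ f n Mf) * (psi ρ g n - S ρ g n Mg)‖ := by
          have := norm_add_le (psi ρ h n - S ρ h n Mh)
            (S ρ h n Mh - S ρ f n Mf * S ρ g n Mg)
          linarith
      _ < ρ n ^ (N : ℝ) := by
          have e1 := h3.trans_lt h4
          have e2 := hmain.trans_lt h5
          have e3 := b3.trans_lt h6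
          have e4 := b4.trans_lt hb7
          have e5 := b5.trans_lt h8
          linarith
  · -- injectivity
    intro f hne hall
    obtain ⟨μ₀, c, hc, h1, h2, hev⟩ := psi_bounds hρpos hρ0 f hne
    obtain ⟨N, hN⟩ := exists_nat_gt ((μ₀ : ℚ) : ℝ)
    have hsm := hup (ev_rpow_small hρpos hρ0 1 c ((μ₀ : ℚ) : ℝ) (N : ℝ) hc hN)
    obtain ⟨n, hn1, hn2, hn3⟩ := ((hall N).and ((hup hev).and hsm)).exists
    have := hn2.1
    have := hn3
    linarith [hn2.1, hn1, hn3]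
  · -- norm preservation
    intro f hne
    obtain ⟨μ₀, c, hc, h1, h2, hev⟩ := psi_bounds hρpos hρ0 f hne
    have hlb : ∀ x ∈ {x : ℝ | ∃ q : ℚ, f.1 q ≠ 0 ∧ (q : ℝ) = x}, ((μ₀ : ℚ) : ℝ) ≤ x := by
      rintro x ⟨q, hq, rfl⟩
      exact_mod_cast h2 q hq
    have hmem : ((μ₀ : ℚ) : ℝ) ∈ {x : ℝ | ∃ q : ℚ, f.1 q ≠ 0 ∧ (q : ℝ) = x} := ⟨μ₀, h1, rfl⟩
    have hsInf : sInf {x : ℝ | ∃ q : ℚ, f.1 q ≠ 0 ∧ (q : ℝ) = x} = ((μ₀ : ℚ) : ℝ) :=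
      le_antisymm (csInf_le ⟨_, hlb⟩ hmem) (le_csInf ⟨_, hmem⟩ hlb)
    rw [hsInf]
    intro ε hε
    set D : ℝ := |Real.log c| + |Real.log (4 * c)| + 1 with hD
    have hDpos : 0 < D := by positivity
    have hlogB : ∀ᶠ n in atTop, Real.log (ρ n) < -(D / ε) := by
      have hlog : Tendsto (fun n => Real.log (ρ n)) atTop atBot :=
        Real.tendsto_log_nhdsNE_zero.comp
          (tendsto_nhdsWithin_iff.mpr ⟨hρ0, Eventually.of_forall fun n => (hρpos n).ne'⟩)
      exact hlog.eventually (eventually_lt_atBot _)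
    have key : ∀ᶠ n in atTop,
        |Real.log (‖psi ρ f n‖) / Real.log (ρ n) - ((μ₀ : ℚ) : ℝ)| < ε := by
      filter_upwards [hev, hlogB] with n hb hlg
      have h0 := hρpos n
      have hDε : 0 < D / ε := div_pos hDpos hε
      have hL : Real.log (ρ n) < 0 := by linarith
      have hLne : Real.log (ρ n) ≠ 0 := hL.ne
      have hpsipos : 0 < ‖psi ρ f n‖ :=
        lt_of_lt_of_le (by positivity) hb.1
      have hup' : Real.log (‖psi ρ f n‖)
          ≤ Real.log (4 * c) + ((μ₀ : ℚ) : ℝ) * Real.log (ρ n) := by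
        have := Real.log_le_log hpsipos hb.2
        rwa [Real.log_mul (by positivity) (Real.rpow_pos_of_pos h0 _).ne',
          Real.log_rpow h0] at this
      have hlo : Real.log c + ((μ₀ : ℚ) : ℝ) * Real.log (ρ n)
          ≤ Real.log (‖psi ρ f n‖) := by
        have := Real.log_le_log (by positivity) hb.1
        rwa [Real.log_mul hc.ne' (Real.rpow_pos_of_pos h0 _).ne',
          Real.log_rpow h0] at this
      set a : ℝ := Real.log (‖psi ρ f n‖) - ((μ₀ : ℚ) : ℝ) * Real.log (ρ n)
        with ha
      have haD : |a| ≤ D := by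
        rw [abs_le]
        constructor
        · have := neg_abs_le (Real.log c)
          simp only [ha]
          rw [hD]
          have h4 := abs_nonneg (Real.log (4 * c))
          linarith
        · have := le_abs_self (Real.log (4 * c))
          simp only [ha]
          rw [hD]
          have h4 := abs_nonneg (Real.log c)
          linarith
      have hquot : Real.log (‖psi ρ f n‖) / Real.log (ρ n) - ((μ₀ : ℚ) : ℝ)
          = a / Real.log (ρ n) := by
        rw [ha]
        field_simp
      rw [hquot, abs_div]
      rw [div_lt_iff₀ (abs_pos.mpr hLne)]
      have hLabs : D / ε < |Real.log (ρ n)| := by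
        rw [abs_of_neg hL]
        linarith
      have : D < ε * |Real.log (ρ n)| := by
        rw [← div_lt_iff₀' hε]
        exact hLabs
      linarith [haD]
    exact hup key
end
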